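/- (No referral influence, equilibrium) Let ε > 0, λ₅ > 0 and λ₂ = λ₆ = 0. Then uv − λ₅λ₇ > 0 and the customer-dynamics model has a unique equilibrium (C*, R*, P_C*, P_R*), given by R* = [(λ₃+mλ₄)up + (λ₁+mλ₄)λ₅q] / (uv − λ₅λ₇), C* = [(λ₁+mλ₄)vq + (λ₃+mλ₄)λ₇p] / (uv − λ₅λ₇), P_R* = p − R* and P_C* = q − C*; moreover all four components are nonnegative. -/

import Mathlib

open Real Filter Topology

/-- The customer-dynamics model: `(C, R, PC, PR)` solves the system on `[t0, ∞)`. -/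
def IsSolution (l1 l2 l3 l4 l5 l6 l7 b1 b2 eps gam m mR al t0 : ℝ)
    (C R PC PR : ℝ → ℝ) : Prop :=
  ∀ t : ℝ, t0 ≤ t →
    HasDerivAt C (l7 * R t - (eps + b1 + l5) * C t + (l1 + m * l4) * PC t
      + l2 * R t * PC t) t ∧
    HasDerivAt R (l5 * C t - (eps + b2 + l7) * R t + (l3 + m * l4) * PR t
      + (l2 + mR * l6) * R t * PR t) t ∧
    HasDerivAt PC ((1 - al) * gam + b1 * C t + l7 * PR t - (eps + l5 + l1 + m * l4) * PC t
      - l2 * R t * PC t) t ∧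
    HasDerivAt PR (al * gam + b2 * R t + l5 * PC t - (eps + l7 + l3 + m * l4) * PR t
      - (l2 + mR * l6) * R t * PR t) t

/-- An equilibrium of the customer-dynamics model: all four right-hand sides vanish. -/
def IsEquilibrium (l1 l2 l3 l4 l5 l6 l7 b1 b2 eps gam m mR al : ℝ)
    (C R PC PR : ℝ) : Prop :=
  l7 * R - (eps + b1 + l5) * C + (l1 + m * l4) * PC + l2 * R * PC = 0 ∧
  l5 * C - (eps + b2 + l7) * R + (l3 + m * l4) * PR + (l2 + mR * l6) * R * PR = 0 ∧
  (1 - al) * gam + b1 * C + l7 * PR - (eps + l5 + l1 + m * l4) * PC - l2 * R * PC = 0 ∧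
  al * gam + b2 * R + l5 * PC - (eps + l7 + l3 + m * l4) * PR - (l2 + mR * l6) * R * PR = 0

theorem no_referral_influence_equilibrium (l1 l2 l3 l4 l5 l6 l7 b1 b2 eps gam m mR al : ℝ) (p q u v Cs Rs PCs PRs : ℝ)
    (hl1 : 0 ≤ l1) (hl2 : 0 ≤ l2) (hl3 : 0 ≤ l3) (hl4 : 0 ≤ l4) (hl5 : 0 ≤ l5)
    (hl6 : 0 ≤ l6) (hl7 : 0 ≤ l7) (hb1 : 0 ≤ b1) (hb2 : 0 ≤ b2) (heps0 : 0 ≤ eps)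
    (hgam : 0 ≤ gam) (hm : 0 ≤ m) (hmR : 0 ≤ mR) (hal0 : 0 ≤ al) (hal1 : al ≤ 1)
    (heps : 0 < eps) (hl5pos : 0 < l5)
    (hl2 : l2 = 0) (hl6 : l6 = 0)
    (hp : p = gam * (al * eps + l5) / (eps * (eps + l5 + l7)))
    (hq : q = gam * ((1 - al) * eps + l7) / (eps * (eps + l5 + l7)))
    (hu : u = eps + b1 + l5 + l1 + m * l4) (hv : v = eps + b2 + l7 + l3 + m * l4)
    (hRs : Rs = ((l3 + m * l4) * u * p + (l1 + m * l4) * l5 * q) / (u * v - l5 * l7))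
    (hCs : Cs = ((l1 + m * l4) * v * q + (l3 + m * l4) * l7 * p) / (u * v - l5 * l7))
    (hPRs : PRs = p - Rs)
    (hPCs : PCs = q - Cs) :
    0 < u * v - l5 * l7 ∧
    (IsEquilibrium l1 l2 l3 l4 l5 l6 l7 b1 b2 eps gam m mR al Cs Rs PCs PRs ∧
      0 ≤ Cs ∧ 0 ≤ Rs ∧ 0 ≤ PCs ∧ 0 ≤ PRs) ∧
    (∀ C' R' PC' PR' : ℝ, IsEquilibrium l1 l2 l3 l4 l5 l6 l7 b1 b2 eps gam m mR al C' R' PC' PR' →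
      (C', R', PC', PR') = (Cs, Rs, PCs, PRs)) := by
  subst hl2 hl6
  have h1al : (0:ℝ) ≤ 1 - al := by linarith
  have hmA : (0:ℝ) ≤ m * l4 := mul_nonneg hm hl4
  have hA0 : (0:ℝ) ≤ l1 + m * l4 := by linarith
  have hB0 : (0:ℝ) ≤ l3 + m * l4 := by linarith
  have hepsl : (0:ℝ) < eps + l5 + l7 := by linarith
  have hD : (0:ℝ) < eps * (eps + l5 + l7) := mul_pos heps hepsl
  have hDne : eps * (eps + l5 + l7) ≠ 0 := hD.ne'
  have hu1 : eps + l5 ≤ u := by rw [hu]; linarith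
  have hv1 : eps + l7 ≤ v := by rw [hv]; linarith
  have huv : (eps + l5) * (eps + l7) ≤ u * v :=
    mul_le_mul hu1 hv1 (by linarith) (by linarith)
  have hdet : 0 < u * v - l5 * l7 := by nlinarith [mul_pos heps heps, mul_nonneg heps0 hl7, mul_nonneg hl5 heps0]
  have hdetne : u * v - l5 * l7 ≠ 0 := hdet.ne'
  have hu0 : (0:ℝ) ≤ u := by linarith
  have hv0 : (0:ℝ) ≤ v := by linarith
  -- key identities
  have kp : eps * (eps + l5 + l7) * p = gam * (al * eps + l5) := by
    rw [hp]; field_simp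
  have kq : eps * (eps + l5 + l7) * q = gam * ((1 - al) * eps + l7) := by
    rw [hq]; field_simp
  have kR : (u * v - l5 * l7) * Rs = (l3 + m * l4) * u * p + (l1 + m * l4) * l5 * q := by
    rw [hRs]; field_simp
  have kC : (u * v - l5 * l7) * Cs = (l1 + m * l4) * v * q + (l3 + m * l4) * l7 * p := by
    rw [hCs]; field_simp
  have k1 : (eps + l5) * q - l7 * p = (1 - al) * gam := by
    apply mul_left_cancel₀ hDne
    linear_combination (eps + l5) * kq - l7 * kp
  have k2 : (eps + l7) * p - l5 * q = al * gam := by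
    apply mul_left_cancel₀ hDne
    linear_combination (eps + l7) * kp - l5 * kq
  have f1s : u * Cs = l7 * Rs + (l1 + m * l4) * q := by
    apply mul_left_cancel₀ hdetne
    linear_combination u * kC - l7 * kR
  have f2s : v * Rs = l5 * Cs + (l3 + m * l4) * p := by
    apply mul_left_cancel₀ hdetne
    linear_combination v * kR - l5 * kC
  -- nonnegativity
  have hp0 : 0 ≤ p := by
    rw [hp]
    refine div_nonneg (mul_nonneg hgam ?_) hD.le
    exact add_nonneg (mul_nonneg hal0 heps0) hl5
  have hq0 : 0 ≤ q := by
    rw [hq]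
    refine div_nonneg (mul_nonneg hgam ?_) hD.le
    exact add_nonneg (mul_nonneg h1al heps0) hl7
  have hRs0 : 0 ≤ Rs := by
    rw [hRs]
    refine div_nonneg ?_ hdet.le
    have := mul_nonneg (mul_nonneg hB0 hu0) hp0
    have := mul_nonneg (mul_nonneg hA0 hl5) hq0
    linarith
  have hCs0 : 0 ≤ Cs := by
    rw [hCs]
    refine div_nonneg ?_ hdet.le
    have := mul_nonneg (mul_nonneg hA0 hv0) hq0
    have := mul_nonneg (mul_nonneg hB0 hl7) hp0
    linarith
  have key1 : 0 ≤ (al * eps + l5) * (eps + b1 + l5 + l1 + m * l4) * (eps + b2 + l7)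
      - (al * eps + l5) * l5 * l7 - (l1 + m * l4) * l5 * ((1 - al) * eps + l7) := by
    linarith only [mul_nonneg (mul_nonneg (hl5) hb1) hb2, mul_nonneg (mul_nonneg (hl5) hl7) hb1, mul_nonneg (mul_nonneg (hl5) hl5) hb2, mul_nonneg (mul_nonneg (mul_nonneg (hl4) hl5) hb2) hm, mul_nonneg (mul_nonneg (hl1) hl5) hb2, mul_nonneg (mul_nonneg (heps0) hl5) hb2, mul_nonneg (mul_nonneg (heps0) hl5) hb1, mul_nonneg (mul_nonneg (heps0) hl5) hl7, mul_nonneg (mul_nonneg (heps0) hl5) hl5, mul_nonneg (mul_nonneg (heps0) heps0) hl5, mul_nonneg (mul_nonneg (mul_nonneg (hal0) heps0) hb1) hb2, mul_nonneg (mul_nonneg (mul_nonneg (hal0) heps0) hl7) hb1, mul_nonneg (mul_nonneg (mul_nonneg (hal0) heps0) hl5) hb2, mul_nonneg (mul_nonneg (mul_nonneg (mul_nonneg (hal0) heps0) hl4) hb2) hm, mul_nonneg (mul_nonneg (mul_nonneg (mul_nonneg (hal0) heps0) hl4) hl7) hm, mul_nonneg (mul_nonneg (mul_nonneg (mul_nonneg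 (hal0) heps0) hl4) hl5) hm, mul_nonneg (mul_nonneg (mul_nonneg (hal0) heps0) hl1) hb2, mul_nonneg (mul_nonneg (mul_nonneg (hal0) heps0) hl1) hl7, mul_nonneg (mul_nonneg (mul_nonneg (hal0) heps0) hl1) hl5, mul_nonneg (mul_nonneg (mul_nonneg (hal0) heps0) heps0) hb2, mul_nonneg (mul_nonneg (mul_nonneg (hal0) heps0) heps0) hb1, mul_nonneg (mul_nonneg (mul_nonneg (hal0) heps0) heps0) hl7, mul_nonneg (mul_nonneg (mul_nonneg (hal0) heps0) heps0) hl5, mul_nonneg (mul_nonneg (mul_nonneg (mul_nonneg (hal0) heps0) heps0) hl4) hm, mul_nonneg (mul_nonneg (mul_nonneg (hal0) heps0) heps0) hl1, mul_nonneg (mul_nonneg (mul_nonneg (hal0) heps0) heps0) heps0]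
  have key2 : 0 ≤ ((1 - al) * eps + l7) * (eps + b2 + l7 + l3 + m * l4) * (eps + b1 + l5)
      - ((1 - al) * eps + l7) * l5 * l7 - (l3 + m * l4) * l7 * (al * eps + l5) := by
    linarith only [mul_nonneg (mul_nonneg (hl7) hb1) hb2, mul_nonneg (mul_nonneg (hl7) hl7) hb1, mul_nonneg (mul_nonneg (hl5) hl7) hb2, mul_nonneg (mul_nonneg (mul_nonneg (hl4) hl7) hb1) hm, mul_nonneg (mul_nonneg (hl3) hl7) hb1, mul_nonneg (mul_nonneg (heps0) hl7) hb2, mul_nonneg (mul_nonneg (heps0) hl7) hb1, mul_nonneg (mul_nonneg (heps0) hl7) hl7, mul_nonneg (mul_nonneg (heps0) hl5) hl7, mul_nonneg (mul_nonneg (heps0) heps0) hl7, mul_nonneg (mul_nonneg (mul_nonneg (h1al) heps0) hb1) hb2, mul_nonneg (mul_nonneg (mul_nonneg (h1al) heps0) hl7) hb1, mul_nonneg (mul_nonneg (mul_nonneg (h1al) heps0) hl5) hb2, mul_nonneg (mul_nonneg (mul_nonneg (mul_nonneg (h1al) heps0) hl4) hb1) hm, mul_nonneg (mul_nonneg (mul_nonneg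 (mul_nonneg (h1al) heps0) hl4) hl7) hm, mul_nonneg (mul_nonneg (mul_nonneg (mul_nonneg (h1al) heps0) hl4) hl5) hm, mul_nonneg (mul_nonneg (mul_nonneg (h1al) heps0) hl3) hb1, mul_nonneg (mul_nonneg (mul_nonneg (h1al) heps0) hl3) hl7, mul_nonneg (mul_nonneg (mul_nonneg (h1al) heps0) hl3) hl5, mul_nonneg (mul_nonneg (mul_nonneg (h1al) heps0) heps0) hb2, mul_nonneg (mul_nonneg (mul_nonneg (h1al) heps0) heps0) hb1, mul_nonneg (mul_nonneg (mul_nonneg (h1al) heps0) heps0) hl7, mul_nonneg (mul_nonneg (mul_nonneg (h1al) heps0) heps0) hl5, mul_nonneg (mul_nonneg (mul_nonneg (mul_nonneg (h1al) heps0) heps0) hl4) hm, mul_nonneg (mul_nonneg (mul_nonneg (h1al) heps0) heps0) hl3, mul_nonneg (mul_nonneg (mul_nonneg (h1al) heps0) heps0) heps0]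
  have hdetne' : (eps + b1 + l5 + l1 + m * l4) * (eps + b2 + l7 + l3 + m * l4) - l5 * l7 ≠ 0 := by
    rw [← hu, ← hv]; exact hdetne
  have hPRs0 : 0 ≤ PRs := by
    have hid : PRs = gam * ((al * eps + l5) * (eps + b1 + l5 + l1 + m * l4) * (eps + b2 + l7)
        - (al * eps + l5) * l5 * l7 - (l1 + m * l4) * l5 * ((1 - al) * eps + l7))
        / ((eps * (eps + l5 + l7)) * (u * v - l5 * l7)) := by
      rw [hPRs, hRs, hp, hq, hu, hv]
      field_simp
      ring
    rw [hid]
    exact div_nonneg (mul_nonneg hgam key1) (mul_nonneg hD.le hdet.le)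
  have hPCs0 : 0 ≤ PCs := by
    have hid : PCs = gam * (((1 - al) * eps + l7) * (eps + b2 + l7 + l3 + m * l4) * (eps + b1 + l5)
        - ((1 - al) * eps + l7) * l5 * l7 - (l3 + m * l4) * l7 * (al * eps + l5))
        / ((eps * (eps + l5 + l7)) * (u * v - l5 * l7)) := by
      rw [eq_div_iff (mul_ne_zero hDne hdetne), hPCs]
      subst hu hv
      linear_combination ((eps + b1 + l5 + l1 + m * l4) * (eps + b2 + l7 + l3 + m * l4) - l5 * l7) * kq - eps * (eps + l5 + l7) * kC - (l1 + m * l4) * (eps + b2 + l7 + l3 + m * l4) * kq - (l3 + m * l4) * l7 * kp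
    rw [hid]
    exact div_nonneg (mul_nonneg hgam key2) (mul_nonneg hD.le hdet.le)
  refine ⟨hdet, ⟨⟨?_, ?_, ?_, ?_⟩, hCs0, hRs0, hPCs0, hPRs0⟩, ?_⟩
  · -- eq1
    rw [hPCs]
    apply mul_left_cancel₀ hdetne
    linear_combination l7 * kR - u * kC + ((u * v - l5 * l7) * Cs) * hu
  · -- eq2
    rw [hPRs]
    apply mul_left_cancel₀ hdetne
    linear_combination l5 * kC - v * kR + ((u * v - l5 * l7) * Rs) * hv
  · -- eq3
    rw [hPCs, hPRs]
    linear_combination f1s - k1 - Cs * hu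
  · -- eq4
    rw [hPCs, hPRs]
    linear_combination f2s - k2 - Rs * hv
  · -- uniqueness
    intro C' R' PC' PR' h
    obtain ⟨e1, e2, e3, e4⟩ := h
    have hS : C' + PC' = q := by
      apply mul_left_cancel₀ hDne
      linear_combination (-(eps + l7)) * e1 - (eps + l7) * e3 - l7 * e2 - l7 * e4 - kq
    have hT : R' + PR' = p := by
      apply mul_left_cancel₀ hDne
      linear_combination (-l5) * e1 - l5 * e3 - (eps + l5) * e2 - (eps + l5) * e4 - kp
    have f1 : u * C' - l7 * R' = (l1 + m * l4) * q := by
      linear_combination -e1 + (l1 + m * l4) * hS + C' * hu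
    have f2 : v * R' - l5 * C' = (l3 + m * l4) * p := by
      linear_combination -e2 + (l3 + m * l4) * hT + R' * hv
    have hC : C' = Cs := by
      apply mul_left_cancel₀ hdetne
      linear_combination v * f1 + l7 * f2 - kC
    have hR : R' = Rs := by
      apply mul_left_cancel₀ hdetne
      linear_combination l5 * f1 + u * f2 - kR
    have hPC : PC' = PCs := by rw [hPCs, ← hS, hC]; ring
    have hPR : PR' = PRs := by rw [hPRs, ← hT, hR]; ring
    rw [hC, hR, hPC, hPR]
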